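/- The number of primitive but non-ins-robust words of length n ≥ 2 over alphabet V satisfies |Q_{\bar I}(n)| ≤ (n+1)·(|Z(n+1)| − |V|), where Z(n+1) is the set of non-primitive words of length n+1. -/

import Mathlib

/-- `wpow v n` is the word `v` repeated `n` times. -/
def wpow {V : Type*} (v : List V) : ℕ → List V
  | 0 => []
  | n + 1 => v ++ wpow v n

/-- A word is primitive if it is nonempty and not a proper power. -/
def Primitive {V : Type*} (w : List V) : Prop :=
  w ≠ [] ∧ ∀ (v : List V) (n : ℕ), w = wpow v n → n = 1

/-- A word is ins-robust if it is primitive and inserting any letter at any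
position yields a primitive word. -/
def InsRobust {V : Type*} (w : List V) : Prop :=
  Primitive w ∧ ∀ (x y : List V) (a : V), w = x ++ y → Primitive (x ++ a :: y)

/-- `HasPeriod w p` : the word `w` is periodic with period `p`. -/
def HasPeriod {V : Type*} (w : List V) (p : ℕ) : Prop :=
  ∀ i, i + p < w.length → w[i]? = w[i + p]?

lemma wpow_single {V : Type*} (a : V) : ∀ m, wpow [a] m = List.replicate m a
  | 0 => rfl
  | m + 1 => by simp [wpow, wpow_single a m, List.replicate_succ]

lemma erase_mid {V : Type*} (a : V) : ∀ (x y : List V), (x ++ a :: y).eraseIdx x.length = x ++ y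
  | [], y => rfl
  | b :: x, y => by simp [List.eraseIdx, erase_mid a x y]

lemma finite_aux {V : Type*} [Finite V] (P : List V → Prop) (n : ℕ) :
    Finite {w : List V // w.length = n ∧ P w} := by
  have : {w : List V | w.length = n ∧ P w}.Finite :=
    (List.finite_length_eq V n).subset fun w hw => hw.1
  exact this.to_subtype

theorem stmt17 {V : Type*} [Fintype V] (n : ℕ) (hn : 2 ≤ n) :
    Nat.card {w : List V // w.length = n ∧ Primitive w ∧ ¬ InsRobust w} ≤
      (n + 1) *
        (Nat.card {w : List V // w.length = n + 1 ∧ ¬ Primitive w} - Fintype.card V) := by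
  classical
  set S1 := {w : List V // w.length = n ∧ Primitive w ∧ ¬ InsRobust w}
  set S2 := {w : List V // w.length = n + 1 ∧ ¬ Primitive w}
  set S3 := {u : List V // u.length = n + 1 ∧ ¬ Primitive u ∧
      ∀ a : V, u ≠ List.replicate (n + 1) a}
  have f2 : Finite S2 := finite_aux _ _
  have f3 : Finite S3 := finite_aux _ _
  -- existence of data for each s : S1
  have hdata : ∀ s : S1, ∃ p : List V × List V × V,
      s.1 = p.1 ++ p.2.1 ∧ ¬ Primitive (p.1 ++ p.2.2 :: p.2.1) := by
    rintro ⟨w, hlen, hprim, hnr⟩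
    simp only [InsRobust, not_and, not_forall] at hnr
    obtain ⟨x, y, a, hxy, hnp⟩ := hnr hprim
    exact ⟨⟨x, y, a⟩, hxy, hnp⟩
  -- the injection S1 → Fin (n+1) × S3
  have step1 : Nat.card S1 ≤ (n + 1) * Nat.card S3 := by
    have key : ∀ s : S1, ∃ q : Fin (n + 1) × S3, s.1 = q.2.1.eraseIdx q.1 := by
      rintro ⟨w, hlen, hprim, hnr⟩
      obtain ⟨⟨x, y, a⟩, hxy0, hnp0⟩ := hdata ⟨w, hlen, hprim, hnr⟩
      have hxy : w = x ++ y := hxy0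
      have hnp : ¬ Primitive (x ++ a :: y) := hnp0
      have hxl : x.length < n + 1 := by
        have : x.length ≤ w.length := by rw [hxy]; simp
        omega
      have hlen' : (x ++ a :: y).length = n + 1 := by
        have := hxy ▸ hlen; simp_all; omega
      have hnc : ∀ b : V, x ++ a :: y ≠ List.replicate (n + 1) b := by
        intro b hb
        have hw : w = List.replicate n b := by
          rw [List.eq_replicate_iff]
          refine ⟨hlen, fun c hc => ?_⟩
          apply List.eq_of_mem_replicate (n := n + 1)
          rw [← hb]
          rw [hxy] at hc
          simp only [List.mem_append] at hc ⊢
          rcases hc with h | h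
          · exact Or.inl h
          · exact Or.inr (List.mem_cons_of_mem _ h)
        have := hprim.2 [b] n (by rw [hw, wpow_single])
        omega
      refine ⟨⟨⟨x.length, hxl⟩, ⟨x ++ a :: y, hlen', hnp, hnc⟩⟩, ?_⟩
      simp only
      rw [erase_mid, ← hxy]
    choose g hg using key
    have hginj : Function.Injective g := by
      intro s t hst
      have := hg s
      rw [hst, ← hg t] at this
      exact Subtype.ext this
    calc Nat.card S1 ≤ Nat.card (Fin (n + 1) × S3) :=
          Nat.card_le_card_of_injective g hginj
      _ = (n + 1) * Nat.card S3 := by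
          rw [Nat.card_prod, Nat.card_eq_fintype_card, Fintype.card_fin]
  have step2 : Nat.card S3 ≤ Nat.card S2 - Fintype.card V := by
    have hrep : ∀ a : V, (List.replicate (n + 1) a).length = n + 1 ∧
        ¬ Primitive (List.replicate (n + 1) a) := by
      intro a
      refine ⟨List.length_replicate, fun hp => ?_⟩
      have := hp.2 [a] (n + 1) (by rw [wpow_single])
      omega
    set g : S3 ⊕ V → S2 := fun z => match z with
      | Sum.inl u => ⟨u.1, u.2.1, u.2.2.1⟩
      | Sum.inr a => ⟨List.replicate (n + 1) a, hrep a⟩ with hgdef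
    have hginj : Function.Injective g := by
      rintro (u | a) (v | b) h <;>
        have h' := congrArg Subtype.val h <;>
        simp only [hgdef] at h'
      · exact congrArg Sum.inl (Subtype.ext h')
      · exact absurd h' (u.2.2.2 b)
      · exact absurd h'.symm (v.2.2.2 a)
      · have : a = b := by
          have ha : a ∈ List.replicate (n + 1) b := by
            rw [← h']; exact List.mem_replicate.2 ⟨by omega, rfl⟩
          exact List.eq_of_mem_replicate ha
        exact congrArg Sum.inr this
    have := Nat.card_le_card_of_injective g hginj
    rw [Nat.card_sum, Nat.card_eq_fintype_card (α := V)] at this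
    omega
  calc Nat.card S1 ≤ (n + 1) * Nat.card S3 := step1
    _ ≤ (n + 1) * (Nat.card S2 - Fintype.card V) := Nat.mul_le_mul_left _ step2
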